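/- On ℝ^n (n ≥ 3) with flat metric, for ℓ ≥ 1 and a covector-valued function μ_b, the identity Δ^ℓ (Z_B^b μ_b) = -2ℓ Y_B ∇^b Δ^{ℓ-1} μ_b + Z_B^b Δ^ℓ μ_b holds, where the tractor projectors satisfy ∇_a Z_B^b μ_b = -Y_B μ_a + Z_B^b ∇_a μ_b and ∇_a Y_B σ = Y_B ∇_a σ (flat case), and Δ = ∇^a ∇_a with all ∇_a mutually commuting. -/

import Mathlib

/-- Formula (Decomp), second line: on flat `ℝ^n`,
`Δ^ℓ (Z^b μ_b) = -2ℓ Y ∇^b Δ^{ℓ-1} μ_b + Z^b Δ^ℓ μ_b`,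
modeled abstractly via modules with commuting operators `∇_a` and formal tractor
generators `Y, Z^b` obeying the flat commutation rules. -/
theorem laplacian_power_commute_Z
    (n ℓ : ℕ) (hn : 3 ≤ n) (hl : 1 ≤ ℓ)
    (V W : Type) [AddCommGroup V] [Module ℝ V] [AddCommGroup W] [Module ℝ W]
    (Dv : Fin n → Module.End ℝ V) (Dw : Fin n → Module.End ℝ W)
    (Y : V →ₗ[ℝ] W) (Z : Fin n → V →ₗ[ℝ] W)
    (hcomm : ∀ a b, Dv a * Dv b = Dv b * Dv a)
    (hY : ∀ (a : Fin n) (σ : V), Dw a (Y σ) = Y (Dv a σ))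
    (hZ : ∀ (a : Fin n) (μ : Fin n → V),
      Dw a (∑ b, Z b (μ b)) = -(Y (μ a)) + ∑ b, Z b (Dv a (μ b)))
    (μ : Fin n → V) :
    ((∑ a, Dw a * Dw a) ^ ℓ) (∑ b, Z b (μ b))
      = (-(2 * (ℓ : ℝ))) •
            Y (∑ b, Dv b (((∑ a, Dv a * Dv a) ^ (ℓ - 1)) (μ b)))
        + ∑ b, Z b (((∑ a, Dv a * Dv a) ^ ℓ) (μ b)) := by
  set Δv : Module.End ℝ V := ∑ a, Dv a * Dv a with hΔv
  set Δw : Module.End ℝ W := ∑ a, Dw a * Dw a with hΔw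
  -- single step lemma
  have step : ∀ ν : Fin n → V,
      Δw (∑ b, Z b (ν b)) = (-2 : ℝ) • Y (∑ b, Dv b (ν b)) + ∑ b, Z b (Δv (ν b)) := by
    intro ν
    have happ : Δw (∑ b, Z b (ν b)) = ∑ a, Dw a (Dw a (∑ b, Z b (ν b))) := by
      rw [hΔw, LinearMap.sum_apply]
      simp [Module.End.mul_apply]
    rw [happ]
    have hterm : ∀ a, Dw a (Dw a (∑ b, Z b (ν b)))
        = -(Y (Dv a (ν a))) + (-(Y (Dv a (ν a))) + ∑ b, Z b (Dv a (Dv a (ν b)))) := by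
      intro a
      rw [hZ a ν, map_add, map_neg, hY, hZ a (fun b => Dv a (ν b))]
    simp only [hterm]
    rw [Finset.sum_add_distrib, Finset.sum_add_distrib, ← add_assoc]
    have h1 : (∑ a, -(Y (Dv a (ν a)))) + (∑ a, -(Y (Dv a (ν a))))
        = (-2 : ℝ) • Y (∑ b, Dv b (ν b)) := by
      rw [Finset.sum_neg_distrib, ← map_sum]
      module
    rw [h1]
    congr 1
    rw [Finset.sum_comm]
    refine Finset.sum_congr rfl fun b _ => ?_
    rw [← map_sum]
    congr 1
    rw [hΔv, LinearMap.sum_apply]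
    simp [Module.End.mul_apply]
  -- Δw^k on Y
  have hYpow : ∀ (k : ℕ) (σ : V), (Δw ^ k) (Y σ) = Y ((Δv ^ k) σ) := by
    intro k
    induction k with
    | zero => simp
    | succ k ih =>
      intro σ
      have hY1 : ∀ τ : V, Δw (Y τ) = Y (Δv τ) := by
        intro τ
        rw [hΔw, hΔv, LinearMap.sum_apply, LinearMap.sum_apply, map_sum]
        refine Finset.sum_congr rfl fun a _ => ?_
        simp [Module.End.mul_apply, hY]
      rw [pow_succ', Module.End.mul_apply, ih, hY1, ← Module.End.mul_apply, ← pow_succ']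
  -- Δv commutes with Dv b
  have hcommΔ : ∀ b, Commute Δv (Dv b) := by
    intro b
    rw [hΔv]
    refine Commute.sum_left _ _ _ fun a _ => ?_
    exact Commute.mul_left (hcomm a b) (hcomm a b)
  have hcommΔpow : ∀ (k : ℕ) (b : Fin n) (v : V),
      Δv ((Dv b) ((Δv ^ k) v)) = Dv b ((Δv ^ (k+1)) v) := by
    intro k b v
    have := ((hcommΔ b).symm.pow_right (k)).symm
    calc Δv ((Dv b) ((Δv ^ k) v)) = (Δv * (Dv b * Δv ^ k)) v := by
          simp [Module.End.mul_apply]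
      _ = (Dv b * Δv ^ (k+1)) v := by
          rw [← mul_assoc, (hcommΔ b).eq, mul_assoc, ← pow_succ']
      _ = Dv b ((Δv ^ (k+1)) v) := by simp [Module.End.mul_apply]
  -- main induction
  induction ℓ with
  | zero => omega
  | succ m ih =>
    rcases Nat.eq_or_lt_of_le hl with h1 | h1
    · -- m + 1 = 1, i.e. m = 0
      have hm : m = 0 := by omega
      subst hm
      have := step μ
      rw [pow_one, this]
      norm_num
    · have hm : 1 ≤ m := by omega
      have IH := ih hm
      have hY1 : ∀ τ : V, Δw (Y τ) = Y (Δv τ) := fun τ => by simpa using hYpow 1 τ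
      rw [pow_succ', Module.End.mul_apply, IH, map_add, map_smul, hY1,
        step (fun b => (Δv ^ m) (μ b))]
      have hA : Δv (∑ b, Dv b ((Δv ^ (m - 1)) (μ b))) = ∑ b, Dv b ((Δv ^ m) (μ b)) := by
        rw [map_sum]
        refine Finset.sum_congr rfl fun b _ => ?_
        have := hcommΔpow (m-1) b (μ b)
        rwa [Nat.sub_add_cancel hm] at this
      have hZ' : ∀ b, Δv ((Δv ^ m) (μ b)) = (Δv ^ (m+1)) (μ b) := by
        intro b
        rw [pow_succ', Module.End.mul_apply]
      rw [hA]
      simp only [hZ', Nat.add_sub_cancel]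
      push_cast
      module
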